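/- For basic repetition-free PGA terms t and t' in third canonical form: if t and t' are behaviourally congruent then t is a single primitive instruction if and only if t' is, and t is of the form u ; s if and only if t' is of the form u' ; s'. Moreover, when t is a single primitive instruction, behavioural congruence of t and t' implies t and t' are syntactically identical. -/
import Mathlib


/-- Primitive instructions over a set `A` of basic instructions: plain
basic instructions, positive and negative tests, forward jumps, and the
termination instruction. -/
inductive PInstr (A : Type) where
  | basic : A → PInstr A
  | ptst : A → PInstr A
  | ntst : A → PInstr A
  | jmp : ℕ → PInstr A
  | halt : PInstr A

/-- Closed BTA terms over basic actions `A`: inaction `D`, termination `S`,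
and postconditional composition. -/
inductive BTA (A : Type) where
  | D : BTA A
  | S : BTA A
  | pcc : BTA A → A → BTA A → BTA A

open PInstr BTA

/-- Thread extraction (rules TE1–TE13) as a relation between non-empty
finite instruction sequences (lists of primitive instructions) and closed
BTA terms.  `a ∘ x` is `x ◁ a ▷ x`, i.e. `pcc x a x`. -/
inductive Extract {A : Type} : List (PInstr A) → BTA A → Prop where
  | te1 (a : A) : Extract [basic a] (pcc D a D)
  | te2 (a : A) {X : List (PInstr A)} {x : BTA A} :
      X ≠ [] → Extract X x → Extract (basic a :: X) (pcc x a x)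
  | te3 (a : A) : Extract [ptst a] (pcc D a D)
  | te4 (a : A) {X : List (PInstr A)} {x y : BTA A} :
      X ≠ [] → Extract X x → Extract (jmp 2 :: X) y →
      Extract (ptst a :: X) (pcc x a y)
  | te5 (a : A) : Extract [ntst a] (pcc D a D)
  | te6 (a : A) {X : List (PInstr A)} {x y : BTA A} :
      X ≠ [] → Extract X x → Extract (jmp 2 :: X) y →
      Extract (ntst a :: X) (pcc y a x)
  | te7 (l : ℕ) : Extract [jmp l] D
  | te8 {X : List (PInstr A)} : X ≠ [] → Extract (jmp 0 :: X) D
  | te9 {X : List (PInstr A)} {x : BTA A} :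
      X ≠ [] → Extract X x → Extract (jmp 1 :: X) x
  | te10 (l : ℕ) (u : PInstr A) : Extract [jmp (l + 2), u] D
  | te11 (l : ℕ) (u : PInstr A) {X : List (PInstr A)} {x : BTA A} :
      X ≠ [] → Extract (jmp (l + 1) :: X) x →
      Extract (jmp (l + 2) :: u :: X) x
  | te12 : Extract [(halt : PInstr A)] S
  | te13 {X : List (PInstr A)} : X ≠ [] → Extract (halt :: X) S

/-- A finite instruction sequence has chained jumps if some jump
instruction `#(n+1)` jumps onto another jump instruction. -/
def HasChainedJumps {A : Type} (t : List (PInstr A)) : Prop :=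
  ∃ i n l : ℕ, t[i]? = some (jmp (n + 1)) ∧ t[i + n + 1]? = some (jmp l)

/-- Left-hand sides of the repetition-free control-flow simplification
axioms PGA9–PGA25 (as finite instruction sequences). -/
inductive SimpLHS {A : Type} : List (PInstr A) → Prop where
  | p9 (a : A) : SimpLHS [ptst a, jmp 0, jmp 0]
  | p10 (a : A) : SimpLHS [ntst a, jmp 0, jmp 0]
  | p11 (a : A) : SimpLHS [ptst a, jmp 1]
  | p12 (a : A) : SimpLHS [ntst a, jmp 1]
  | p13 (a : A) (l : ℕ) : SimpLHS [ptst a, jmp (l + 2), jmp (l + 1)]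
  | p14 (a : A) (l : ℕ) : SimpLHS [ntst a, jmp (l + 2), jmp (l + 1)]
  | p15 (a : A) : SimpLHS [ptst a, halt, halt]
  | p16 (a : A) : SimpLHS [ntst a, halt, halt]
  | p19 (a : A) (us : List (PInstr A)) :
      SimpLHS ([jmp (us.length + 3), jmp (us.length + 3), jmp (us.length + 3)]
        ++ us ++ [ptst a])
  | p20 (a : A) (us : List (PInstr A)) :
      SimpLHS ([jmp (us.length + 3), jmp (us.length + 3), jmp (us.length + 3)]
        ++ us ++ [ntst a])
  | p21 (a : A) (us : List (PInstr A)) :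
      SimpLHS ([jmp (us.length + 2), jmp (us.length + 2)] ++ us ++ [basic a])
  | p22 (a : A) (us vs : List (PInstr A)) :
      SimpLHS (jmp (us.length + vs.length + 4) :: us
        ++ [ptst a, jmp (vs.length + 3), jmp (vs.length + 3)] ++ vs ++ [ptst a])
  | p23 (a : A) (us vs : List (PInstr A)) :
      SimpLHS (jmp (us.length + vs.length + 4) :: us
        ++ [ntst a, jmp (vs.length + 3), jmp (vs.length + 3)] ++ vs ++ [ntst a])
  | p24 (a : A) (us vs : List (PInstr A)) :
      SimpLHS (jmp (us.length + vs.length + 3) :: us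
        ++ [basic a, jmp (vs.length + 2)] ++ vs ++ [basic a])
  | p25 (us : List (PInstr A)) :
      SimpLHS (jmp (us.length + 1) :: us ++ [halt])

/-- A finite instruction sequence has simplifiable control flow if it
contains (up to associativity, i.e. as a contiguous segment) the left-hand
side of one of the axioms PGA9–PGA25. -/
def SimplifiableCF {A : Type} (t : List (PInstr A)) : Prop :=
  ∃ p m s : List (PInstr A), t = p ++ m ++ s ∧ SimpLHS m

/-- Third canonical form for finite (repetition-free) instruction
sequences: no chained jumps and no simplifiable control flow. -/
def ThirdCF {A : Type} (t : List (PInstr A)) : Prop :=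
  ¬ HasChainedJumps t ∧ ¬ SimplifiableCF t

/-- Behavioural equivalence of finite instruction sequences: the threads
extracted from them coincide. -/
def BEqL {A : Type} (s s' : List (PInstr A)) : Prop :=
  ∃ b : BTA A, Extract s b ∧ Extract s' b

/-- Behavioural congruence: `t ≅ t'` iff `#l ; t ; !ⁿ ≈ #l ; t' ; !ⁿ` for
all `l, n ∈ ℕ`. -/
def BCongL {A : Type} (t t' : List (PInstr A)) : Prop :=
  ∀ l n : ℕ, BEqL (jmp l :: (t ++ List.replicate n halt))
    (jmp l :: (t' ++ List.replicate n halt))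


section PGAAux
open PInstr BTA
variable {A : Type}

/-- Thread extraction is deterministic. -/
lemma ext_det {X : List (PInstr A)} {b : BTA A}
    (h : Extract X b) : ∀ {b' : BTA A}, Extract X b' → b = b' := by
  induction h with
  | te1 a => intro b' h'; cases h' <;> simp_all
  | te2 a hX hx ih =>
      intro b' h'
      cases h' with
      | te1 => exact absurd rfl hX
      | te2 _ _ hx' => rw [ih hx']
  | te3 a => intro b' h'; cases h' <;> simp_all
  | te4 a hX hx hy ihx ihy =>
      intro b' h'
      cases h' with
      | te3 => exact absurd rfl hX
      | te4 _ _ hx' hy' => rw [ihx hx', ihy hy']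
  | te5 a => intro b' h'; cases h' <;> simp_all
  | te6 a hX hx hy ihx ihy =>
      intro b' h'
      cases h' with
      | te5 => exact absurd rfl hX
      | te6 _ _ hx' hy' => rw [ihx hx', ihy hy']
  | te7 l => intro b' h'; cases h' <;> simp_all
  | te8 hX => intro b' h'; cases h' <;> simp_all
  | te9 hX hx ih =>
      intro b' h'
      cases h' with
      | te7 => exact absurd rfl hX
      | te9 _ hx' => exact ih hx'
  | te10 l u => intro b' h'; cases h' <;> simp_all
  | te11 l u hX hx ih =>
      intro b' h'
      cases h' with
      | te10 => exact absurd rfl hX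
      | te11 _ _ _ hx' => exact ih hx'
  | te12 => intro b' h'; cases h' <;> simp_all
  | te13 hX => intro b' h'; cases h' <;> simp_all

/-- A jump beyond the end of the sequence yields inaction. -/
lemma jmp_far : ∀ (X : List (PInstr A)) (m : ℕ), X.length ≤ m →
    Extract (jmp (m + 1) :: X) D := by
  intro X
  induction X with
  | nil => intro m _; exact Extract.te7 _
  | cons u X' ih =>
      intro m hm
      simp only [List.length_cons] at hm
      obtain ⟨m', rfl⟩ : ∃ m', m = m' + 1 := ⟨m - 1, by omega⟩
      cases X' with
      | nil => exact Extract.te10 m' u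
      | cons v X'' =>
          refine Extract.te11 m' u (by simp) (ih m' ?_)
          simp only [List.length_cons] at hm ⊢
          omega

/-- A jump within the sequence behaves as the rest of the sequence. -/
lemma jmp_in : ∀ (m : ℕ) (X : List (PInstr A)) (b : BTA A), m < X.length →
    Extract (X.drop m) b → Extract (jmp (m + 1) :: X) b := by
  intro m
  induction m with
  | zero =>
      intro X b hm hb
      have hne : X ≠ [] := by rintro rfl; simp at hm
      simpa using Extract.te9 hne (by simpa using hb)
  | succ m ih =>
      intro X b hm hb
      obtain ⟨u, X', rfl⟩ : ∃ u X', X = u :: X' := by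
        cases X with
        | nil => simp at hm
        | cons u X' => exact ⟨u, X', rfl⟩
      simp only [List.length_cons] at hm
      have hne : X' ≠ [] := by rintro rfl; simp at hm
      exact Extract.te11 m u hne (ih X' b (by omega) (by simpa using hb))

lemma jmp_zero (X : List (PInstr A)) : Extract (jmp 0 :: X) D := by
  rcases List.eq_nil_or_concat X with rfl | _
  · exact Extract.te7 0
  · have hne : X ≠ [] := by rintro rfl; simp_all
    exact Extract.te8 hne

lemma halts_S : ∀ n : ℕ, 1 ≤ n → Extract (List.replicate n (halt : PInstr A)) S := by
  intro n hn
  obtain ⟨m, rfl⟩ : ∃ m, n = m + 1 := ⟨n - 1, by omega⟩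
  cases m with
  | zero => simpa using Extract.te12
  | succ k =>
      rw [List.replicate_succ]
      exact Extract.te13 (by simp)

/-- Behaviour of a single instruction followed by `n` halts. -/
def beh1 : PInstr A → ℕ → BTA A
  | basic a, 0 => pcc D a D
  | basic a, _ + 1 => pcc S a S
  | ptst a, 0 => pcc D a D
  | ptst a, 1 => pcc S a D
  | ptst a, _ + 2 => pcc S a S
  | ntst a, 0 => pcc D a D
  | ntst a, 1 => pcc D a S
  | ntst a, _ + 2 => pcc S a S
  | jmp l, n => if 1 ≤ l ∧ l ≤ n then S else D
  | halt, _ => S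

lemma jmp2_halts (n : ℕ) :
    Extract (jmp 2 :: List.replicate (n + 1) (halt : PInstr A))
      (if n = 0 then D else S) := by
  cases n with
  | zero => simpa using jmp_far [halt] 1 (by simp)
  | succ k =>
      simp only [Nat.succ_ne_zero, if_false]
      refine jmp_in 1 _ _ (by simp) ?_
      rw [List.replicate_succ, List.drop_one, List.tail_cons]
      exact halts_S _ (by omega)

lemma beh1_extract (u : PInstr A) (n : ℕ) :
    Extract (u :: List.replicate n halt) (beh1 u n) := by
  cases u with
  | basic a =>
      cases n with
      | zero => simpa [beh1] using Extract.te1 a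
      | succ k =>
          exact Extract.te2 a (by simp) (halts_S _ (by omega))
  | ptst a =>
      match n with
      | 0 => simpa [beh1] using Extract.te3 a
      | 1 =>
          have := Extract.te4 a (X := List.replicate 1 (halt : PInstr A))
            (by simp) (halts_S 1 (by omega)) (by simpa using jmp2_halts 0)
          simpa [beh1] using this
      | (k + 2) =>
          have := Extract.te4 a (X := List.replicate (k + 2) (halt : PInstr A))
            (by simp) (halts_S _ (by omega)) (by simpa using jmp2_halts (k + 1))
          simpa [beh1] using this
  | ntst a =>
      match n with
      | 0 => simpa [beh1] using Extract.te5 a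
      | 1 =>
          have := Extract.te6 a (X := List.replicate 1 (halt : PInstr A))
            (by simp) (halts_S 1 (by omega)) (by simpa using jmp2_halts 0)
          simpa [beh1] using this
      | (k + 2) =>
          have := Extract.te6 a (X := List.replicate (k + 2) (halt : PInstr A))
            (by simp) (halts_S _ (by omega)) (by simpa using jmp2_halts (k + 1))
          simpa [beh1] using this
  | jmp l =>
      by_cases hl : 1 ≤ l ∧ l ≤ n
      · obtain ⟨m, rfl⟩ : ∃ m, l = m + 1 := ⟨l - 1, by omega⟩
        have hdrop : Extract ((List.replicate n (halt : PInstr A)).drop m) S := by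
          rw [List.drop_replicate]
          exact halts_S _ (by omega)
        have := jmp_in m (List.replicate n (halt : PInstr A)) S (by simp; omega) hdrop
        simpa [beh1, hl] using this
      · rcases Nat.eq_zero_or_pos l with rfl | hl1
        · simpa [beh1] using jmp_zero (List.replicate n (halt : PInstr A))
        · obtain ⟨m, rfl⟩ : ∃ m, l = m + 1 := ⟨l - 1, by omega⟩
          have hD := jmp_far (List.replicate n (halt : PInstr A)) m (by simp; omega)
          have hif : beh1 (jmp (m + 1)) n = (D : BTA A) := by
            simp only [beh1, if_neg hl]
          rw [hif]
          exact hD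
  | halt =>
      cases n with
      | zero => simpa [beh1] using Extract.te12
      | succ k =>
          have : Extract ((halt : PInstr A) :: List.replicate (k+1) halt) S :=
            Extract.te13 (by simp)
          simpa [beh1] using this

lemma beh1_inj {u u' : PInstr A} (h : ∀ n, beh1 u n = beh1 u' n) : u = u' := by
  have h0 := h 0
  have h1 := h 1
  cases u <;> cases u'
  case basic.basic a a' => simp only [beh1] at h0; simp_all
  case basic.ptst a a' => simp only [beh1] at h1; simp_all
  case basic.ntst a a' => simp only [beh1] at h1; simp_all
  case basic.jmp a l =>
      simp only [beh1] at h0; rw [if_neg (by omega)] at h0; simp_all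
  case basic.halt a => simp only [beh1] at h0; simp_all
  case ptst.basic a a' => simp only [beh1] at h1; simp_all
  case ptst.ptst a a' => simp only [beh1] at h0; simp_all
  case ptst.ntst a a' => simp only [beh1] at h1; simp_all
  case ptst.jmp a l =>
      simp only [beh1] at h0; rw [if_neg (by omega)] at h0; simp_all
  case ptst.halt a => simp only [beh1] at h0; simp_all
  case ntst.basic a a' => simp only [beh1] at h1; simp_all
  case ntst.ptst a a' => simp only [beh1] at h1; simp_all
  case ntst.ntst a a' => simp only [beh1] at h0; simp_all
  case ntst.jmp a l =>
      simp only [beh1] at h0; rw [if_neg (by omega)] at h0; simp_all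
  case ntst.halt a => simp only [beh1] at h0; simp_all
  case jmp.basic l a =>
      simp only [beh1] at h0; rw [if_neg (by omega)] at h0; simp_all
  case jmp.ptst l a =>
      simp only [beh1] at h0; rw [if_neg (by omega)] at h0; simp_all
  case jmp.ntst l a =>
      simp only [beh1] at h0; rw [if_neg (by omega)] at h0; simp_all
  case jmp.halt l =>
      simp only [beh1] at h0; rw [if_neg (by omega)] at h0; simp_all
  case halt.basic a => simp only [beh1] at h0; simp_all
  case halt.ptst a => simp only [beh1] at h0; simp_all
  case halt.ntst a => simp only [beh1] at h0; simp_all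
  case halt.jmp l =>
      simp only [beh1] at h0; rw [if_neg (by omega)] at h0; simp_all
  case halt.halt => rfl
  case jmp.jmp l l' =>
      have hl := h l
      have hl' := h l'
      simp only [beh1] at hl hl'
      congr 1
      by_contra hne
      rcases Nat.lt_or_ge l l' with hlt | hge
      · rcases Nat.eq_zero_or_pos l with rfl | hp
        · rw [if_neg (by omega), if_pos (by omega)] at hl'
          exact absurd hl' (by simp)
        · rw [if_pos (by omega), if_neg (by omega)] at hl
          exact absurd hl (by simp)
      · have hlt' : l' < l := by omega
        rcases Nat.eq_zero_or_pos l' with rfl | hp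
        · rw [if_pos (by omega), if_neg (by omega)] at hl
          exact absurd hl (by simp)
        · rw [if_neg (by omega), if_pos (by omega)] at hl'
          exact absurd hl' (by simp)

lemma jmp1_inv {X : List (PInstr A)} {b : BTA A} (hX : X ≠ [])
    (h : Extract (jmp 1 :: X) b) : Extract X b := by
  cases h <;> simp_all

lemma bcong_symm {t t' : List (PInstr A)} (h : BCongL t t') : BCongL t' t := by
  intro l n
  obtain ⟨b, h1, h2⟩ := h l n
  exact ⟨b, h2, h1⟩

lemma bcong_len_le {t t' : List (PInstr A)} (h : BCongL t t') :
    t.length ≤ t'.length := by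
  by_contra hlt
  push_neg at hlt
  obtain ⟨b, h1, h2⟩ := h (t.length + 1) 1
  have hS : Extract (jmp (t.length + 1) :: (t ++ List.replicate 1 halt)) S := by
    refine jmp_in t.length _ _ (by simp) ?_
    rw [List.drop_left]
    exact halts_S 1 le_rfl
  have hb : b = S := ext_det h1 hS
  subst hb
  have hD : Extract (jmp (t.length + 1) :: (t' ++ List.replicate 1 halt)) D :=
    jmp_far _ _ (by simp; omega)
  exact absurd (ext_det h2 hD) (by simp)

lemma bcong_len {t t' : List (PInstr A)} (h : BCongL t t') :
    t.length = t'.length :=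
  le_antisymm (bcong_len_le h) (bcong_len_le (bcong_symm h))

end PGAAux

/-- For basic repetition-free terms in third canonical form that are
behaviourally congruent: one is a single primitive instruction iff the
other is, one is a proper concatenation iff the other is, and if one is a
single primitive instruction then they are syntactically identical. -/
theorem bcong_shape {A : Type} (t t' : List (PInstr A))
    (ht : t ≠ []) (ht' : t' ≠ [])
    (hc : ThirdCF t) (hc' : ThirdCF t') (h : BCongL t t') :
    ((∃ u : PInstr A, t = [u]) ↔ (∃ u' : PInstr A, t' = [u'])) ∧
    ((∃ (u : PInstr A) (s : List (PInstr A)), t = u :: s ∧ s ≠ []) ↔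
      (∃ (u' : PInstr A) (s' : List (PInstr A)), t' = u' :: s' ∧ s' ≠ [])) ∧
    (∀ u : PInstr A, t = [u] → t = t') := by
  have hlen := bcong_len h
  have hsing : ∀ (s : List (PInstr A)), (∃ u : PInstr A, s = [u]) ↔ s.length = 1 := by
    intro s
    constructor
    · rintro ⟨u, rfl⟩; rfl
    · intro hs; exact List.length_eq_one_iff.mp hs
  have hcons : ∀ (s : List (PInstr A)), s ≠ [] →
      ((∃ (u : PInstr A) (r : List (PInstr A)), s = u :: r ∧ r ≠ []) ↔ 2 ≤ s.length) := by
    intro s hs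
    constructor
    · rintro ⟨u, r, rfl, hr⟩
      have : 1 ≤ r.length := List.length_pos_iff.mpr hr
      simp
      omega
    · intro h2
      cases s with
      | nil => simp at h2
      | cons u r =>
          refine ⟨u, r, rfl, ?_⟩
          intro hr
          subst hr
          simp at h2
    
  refine ⟨?_, ?_, ?_⟩
  · rw [hsing t, hsing t', hlen]
  · rw [hcons t ht, hcons t' ht', hlen]
  · intro u htu
    have ht'1 : t'.length = 1 := by rw [← hlen, htu]; rfl
    obtain ⟨u', rfl⟩ := List.length_eq_one_iff.mp ht'1
    subst htu
    suffices hu : u = u' by rw [hu]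
    apply beh1_inj
    intro n
    obtain ⟨b, h1, h2⟩ := h 1 n
    simp only [List.singleton_append] at h1 h2
    have e1 := jmp1_inv (by simp) h1
    have e2 := jmp1_inv (by simp) h2
    rw [ext_det (beh1_extract u n) e1, ext_det (beh1_extract u' n) e2]
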